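/- Assume f_ft(X) and f_zs(X) are conditionally independent given Y, the label-shift conditions P_t(e|y)=P_s(e|y) and P_t(z|y)=P_p(z|y) hold, and the underlying class probabilities satisfy P_s(y|e) ∝ exp(e_y) and P_p(y|z) ∝ exp(z_y). Then P_t(y | f_ft(x), f_zs(x)) = softmax(f_ft(x) + f_zs(x) − π_s − π_p + π_t)_y, where π_s, π_p, π_t are the log class priors of the source, pre-training, and target distributions. -/

import Mathlib

open Finset

set_option maxHeartbeats 1000000 in
/-- GLA posterior formula: under conditional independence of the two score
vectors given the label, label shift (`P_t(e|y)=P_s(e|y)`,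
`P_t(z|y)=P_p(z|y)`), and softmax posteriors `P_s(y|e) ∝ exp(e_y)`,
`P_p(y|z) ∝ exp(z_y)`, the target posterior is
`P_t(y|e,z) = softmax(e + z − π_s − π_p + π_t)_y`. -/
theorem gla_posterior_formula
    {E Z : Type*} [Fintype E] [Fintype Z] {K : ℕ} (hK : 0 < K)
    (vece : E → Fin K → ℝ) (vecz : Z → Fin K → ℝ)
    (Pt : E → Z → Fin K → ℝ)               -- target joint over (e, z, y)
    (Ps : E → Fin K → ℝ) (Pp : Z → Fin K → ℝ)  -- source and pre-training joints
    (hPt : ∀ e z y, 0 ≤ Pt e z y) (hPs : ∀ e y, 0 ≤ Ps e y) (hPp : ∀ z y, 0 ≤ Pp z y)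
    (hPtsum : ∑ e, ∑ z, ∑ y, Pt e z y = 1)
    (hPssum : ∑ e, ∑ y, Ps e y = 1) (hPpsum : ∑ z, ∑ y, Pp z y = 1)
    (PtY PsY PpY : Fin K → ℝ)
    (hPtY : ∀ y, PtY y = ∑ e, ∑ z, Pt e z y)
    (hPsY : ∀ y, PsY y = ∑ e, Ps e y)
    (hPpY : ∀ y, PpY y = ∑ z, Pp z y)
    (hPtYpos : ∀ y, 0 < PtY y) (hPsYpos : ∀ y, 0 < PsY y) (hPpYpos : ∀ y, 0 < PpY y)
    (hPtEZpos : ∀ e z, 0 < ∑ y, Pt e z y)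
    -- conditional independence of e and z given y under P_t:
    -- P_t(e,z|y) = P_t(e|y) · P_t(z|y)
    (hindep : ∀ e z y,
      Pt e z y / PtY y = ((∑ z', Pt e z' y) / PtY y) * ((∑ e', Pt e' z y) / PtY y))
    -- label shift: P_t(e|y) = P_s(e|y) and P_t(z|y) = P_p(z|y)
    (hshiftE : ∀ e y, (∑ z', Pt e z' y) / PtY y = Ps e y / PsY y)
    (hshiftZ : ∀ z y, (∑ e', Pt e' z y) / PtY y = Pp z y / PpY y)
    -- softmax posteriors: P_s(y|e) ∝ exp(e_y) and P_p(y|z) ∝ exp(z_y)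
    (hfts : ∀ e y, Ps e y / (∑ y', Ps e y') =
      Real.exp (vece e y) / ∑ i, Real.exp (vece e i))
    (hzs : ∀ z y, Pp z y / (∑ y', Pp z y') =
      Real.exp (vecz z y) / ∑ i, Real.exp (vecz z i)) :
    ∀ e z y, Pt e z y / (∑ y', Pt e z y') =
      Real.exp (vece e y + vecz z y - Real.log (PsY y) - Real.log (PpY y)
        + Real.log (PtY y)) /
      ∑ i, Real.exp (vece e i + vecz z i - Real.log (PsY i) - Real.log (PpY i)
        + Real.log (PtY i)) := by

  intro e z y
  -- product formula for Pt
  have key : ∀ y', Pt e z y' = PtY y' * (Ps e y' / PsY y') * (Pp z y' / PpY y') := by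
    intro y'
    have h := hindep e z y'
    rw [hshiftE, hshiftZ] at h
    have hpos := (hPtYpos y').ne'
    field_simp at h ⊢
    linear_combination h
  -- Ps decomposition
  have hPsdec : ∀ y', Ps e y' = (∑ y'', Ps e y'') *
      (Real.exp (vece e y') / ∑ i, Real.exp (vece e i)) := by
    intro y'
    rcases eq_or_ne (∑ y'', Ps e y'') 0 with hS | hS
    · have : Ps e y' = 0 := by
        have := (Finset.sum_eq_zero_iff_of_nonneg (fun i _ => hPs e i)).1 hS y'
          (Finset.mem_univ _)
        simpa using this
      simp [this, hS]
    · have := hfts e y'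
      field_simp at this ⊢
      linear_combination this
  have hPpdec : ∀ y', Pp z y' = (∑ y'', Pp z y'') *
      (Real.exp (vecz z y') / ∑ i, Real.exp (vecz z i)) := by
    intro y'
    rcases eq_or_ne (∑ y'', Pp z y'') 0 with hS | hS
    · have : Pp z y' = 0 := by
        have := (Finset.sum_eq_zero_iff_of_nonneg (fun i _ => hPp z i)).1 hS y'
          (Finset.mem_univ _)
        simpa using this
      simp [this, hS]
    · have := hzs z y'
      rw [← this]
      field_simp
  set Se := ∑ y'', Ps e y'' with hSe
  set Sz := ∑ y'', Pp z y'' with hSz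
  set Ee := ∑ i, Real.exp (vece e i) with hEe
  set Ez := ∑ i, Real.exp (vecz z i) with hEz
  have hEepos : 0 < Ee := Finset.sum_pos (fun i _ => Real.exp_pos _) ⟨⟨0, hK⟩, Finset.mem_univ _⟩
  have hEzpos : 0 < Ez := Finset.sum_pos (fun i _ => Real.exp_pos _) ⟨⟨0, hK⟩, Finset.mem_univ _⟩
  set C : ℝ := Se * Sz / (Ee * Ez) with hC
  have hA : ∀ y', Real.exp (vece e y' + vecz z y' - Real.log (PsY y') - Real.log (PpY y')
      + Real.log (PtY y')) =
      Real.exp (vece e y') * Real.exp (vecz z y') * PtY y' / (PsY y' * PpY y') := by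
    intro y'
    rw [Real.exp_add, Real.exp_sub, Real.exp_sub, Real.exp_add,
      Real.exp_log (hPsYpos y'), Real.exp_log (hPpYpos y'), Real.exp_log (hPtYpos y')]
    ring
  have hPtC : ∀ y', Pt e z y' = C * (Real.exp (vece e y' + vecz z y' - Real.log (PsY y')
      - Real.log (PpY y') + Real.log (PtY y'))) := by
    intro y'
    have h1 := (hPsYpos y').ne'
    have h2 := (hPpYpos y').ne'
    rw [key y', hPsdec y', hPpdec y', hA y', hC]
    field_simp
  have hCpos : 0 < C := by
    by_contra h
    push_neg at h
    have hSnn : 0 ≤ Se := Finset.sum_nonneg (fun i _ => hPs e i)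
    have hSznn : 0 ≤ Sz := Finset.sum_nonneg (fun i _ => hPp z i)
    have hCnn : 0 ≤ C := hC ▸ div_nonneg (mul_nonneg hSnn hSznn)
      (le_of_lt (mul_pos hEepos hEzpos))
    have hC0 : C = 0 := le_antisymm h hCnn
    have : ∑ y', Pt e z y' = 0 := by
      rw [Finset.sum_congr rfl fun i _ => hPtC i]
      simp [hC0]
    exact absurd this (hPtEZpos e z).ne'
  rw [hPtC y]
  have : ∑ y', Pt e z y' = C * ∑ i, Real.exp (vece e i + vecz z i - Real.log (PsY i)
      - Real.log (PpY i) + Real.log (PtY i)) := by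
    rw [Finset.mul_sum]
    exact Finset.sum_congr rfl fun i _ => hPtC i
  rw [this, mul_div_mul_left _ _ hCpos.ne']
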